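/- Let C be a Cauchon diagram on a Young diagram and let (x,y) be a white square of C such that at least one square (r,c) of the diagram with r < x and c < y is white. Then there exists a white square (a,b) of C with a < x and b < y such that every white square (r,c) of C with r < x and c < y satisfies r ≤ a and c ≤ b; in particular, the set of white squares strictly northwest of (x,y) has a (necessarily unique) maximum in the componentwise order. -/
import Mathlib


/-- A Cauchon diagram on the Young diagram of shape `lam` (rows `1,...,m` top to bottom,
row `r` having columns `1,...,lam r`; `col = true` means black, `col = false` means white):
if `(x,y)` is a white square having at least one white square strictly north-west of it
(i.e. some white `(r,c)` with `r < x`, `c < y`), then the set of white squares strictly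
north-west of `(x,y)` has a maximum in the componentwise order. -/
theorem nearest_white_square_strict_northwest
    (m : ℕ) (lam : ℕ → ℕ) (hm : 1 ≤ m)
    (hmono : ∀ r r', 1 ≤ r → r ≤ r' → r' ≤ m → lam r' ≤ lam r)
    (hpos : ∀ r, 1 ≤ r → r ≤ m → 1 ≤ lam r)
    (col : ℕ × ℕ → Bool)
    (hC : ∀ r c, 1 ≤ r → r ≤ m → 1 ≤ c → c ≤ lam r → col (r, c) = true →
      ¬((∃ c', 1 ≤ c' ∧ c' < c ∧ col (r, c') = false) ∧
        (∃ r', 1 ≤ r' ∧ r' < r ∧ col (r', c) = false)))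
    (x y : ℕ) (hx1 : 1 ≤ x) (hxm : x ≤ m) (hy1 : 1 ≤ y) (hyl : y ≤ lam x)
    (hwhite : col (x, y) = false)
    (hex : ∃ r c, 1 ≤ r ∧ r ≤ m ∧ 1 ≤ c ∧ c ≤ lam r ∧ r < x ∧ c < y ∧
      col (r, c) = false) :
    ∃ a b, 1 ≤ a ∧ a ≤ m ∧ 1 ≤ b ∧ b ≤ lam a ∧ a < x ∧ b < y ∧ col (a, b) = false ∧
      ∀ r c, 1 ≤ r → r ≤ m → 1 ≤ c → c ≤ lam r → r < x → c < y →
        col (r, c) = false → r ≤ a ∧ c ≤ b := by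
  classical
  set S : Finset (ℕ × ℕ) :=
    (Finset.range x ×ˢ Finset.range y).filter
      (fun p => 1 ≤ p.1 ∧ 1 ≤ p.2 ∧ col p = false) with hS
  have hmemS : ∀ p : ℕ × ℕ, p ∈ S ↔
      p.1 < x ∧ p.2 < y ∧ 1 ≤ p.1 ∧ 1 ≤ p.2 ∧ col p = false := by
    intro p
    simp [hS, Finset.mem_filter, Finset.mem_product, and_assoc]
  have hne : S.Nonempty := by
    obtain ⟨r, c, h1, h2, h3, h4, h5, h6, h7⟩ := hex
    exact ⟨(r, c), (hmemS (r, c)).2 ⟨h5, h6, h1, h3, h7⟩⟩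
  obtain ⟨⟨a, c0⟩, haS, ha⟩ := Finset.exists_mem_eq_sup S hne (fun p => p.1)
  obtain ⟨⟨r0, b⟩, hbS, hb⟩ := Finset.exists_mem_eq_sup S hne (fun p => p.2)
  rw [hmemS] at haS hbS
  obtain ⟨hax, hc0y, ha1, hc01, hac0⟩ := haS
  obtain ⟨hr0x, hby, hr01, hb1, hr0b⟩ := hbS
  have ham : a ≤ m := le_trans (le_of_lt hax) hxm
  have hblam : b ≤ lam a :=
    le_trans (le_trans (le_of_lt hby) hyl) (hmono a x ha1 (le_of_lt hax) hxm)
  -- sup bounds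
  have hbound : ∀ r c, 1 ≤ r → 1 ≤ c → r < x → c < y → col (r, c) = false →
      r ≤ a ∧ c ≤ b := by
    intro r c h1 h2 h3 h4 h5
    have hmem : (r, c) ∈ S := (hmemS (r, c)).2 ⟨h3, h4, h1, h2, h5⟩
    constructor
    · exact le_of_le_of_eq (Finset.le_sup (f := fun p => p.1) hmem) ha
    · exact le_of_le_of_eq (Finset.le_sup (f := fun p => p.2) hmem) hb
  have hwab : col (a, b) = false := by
    by_contra hblack
    have hblack' : col (a, b) = true := by
      cases h : col (a, b) with
      | false => exact absurd h hblack
      | true => rfl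
    refine hC a b ha1 ham hb1 hblam hblack' ⟨⟨c0, hc01, ?_, hac0⟩, ⟨r0, hr01, ?_, hr0b⟩⟩
    · rcases lt_or_eq_of_le ((hbound a c0 ha1 hc01 hax hc0y hac0).2) with h | h
      · exact h
      · subst h; exact absurd hac0 (by simp [hblack'])
    · rcases lt_or_eq_of_le ((hbound r0 b hr01 hb1 hr0x hby hr0b).1) with h | h
      · exact h
      · subst h; exact absurd hr0b (by simp [hblack'])
  exact ⟨a, b, ha1, ham, hb1, hblam, hax, hby, hwab,
    fun r c h1 _ h3 _ h5 h6 h7 => hbound r c h1 h3 h5 h6 h7⟩
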